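/- Let ℓ ≥ 2, k ∈ {1,...,ℓ}, and let a, x₁,...,x_ℓ be positive integers such that x₁ + ... + x_ℓ ≤ aℓ - k. Then x₁·x₂·...·x_ℓ ≤ a^(ℓ-k)·(a-1)^k. -/

import Mathlib

open Finset

lemma pow_mix (q t r n : ℕ) (hq : 1 ≤ q) (ht : t ≤ r) (hr : r ≤ n) :
    (q + 1) ^ t * q ^ (n - t) ≤ q ^ (n - r) * (q + 1) ^ r := by
  have h1 : n - t = (n - r) + (r - t) := by omega
  have h2 : r = (r - t) + t := by omega
  calc (q + 1) ^ t * q ^ (n - t)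
      = q ^ (n - r) * (q ^ (r - t) * (q + 1) ^ t) := by rw [h1, pow_add]; ring
    _ ≤ q ^ (n - r) * ((q + 1) ^ (r - t) * (q + 1) ^ t) := by
        have hp : q ^ (r - t) ≤ (q + 1) ^ (r - t) := Nat.pow_le_pow_left (by omega) _
        exact Nat.mul_le_mul_left _ (Nat.mul_le_mul_right _ hp)
    _ = q ^ (n - r) * (q + 1) ^ r := by rw [← pow_add, ← h2]

lemma key (q : ℕ) (hq : 1 ≤ q) :
    ∀ N n r (x : Fin n → ℕ), r < n → (∀ i, 1 ≤ x i) →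
      (∑ i, x i) ≤ q * n + r → (∑ i, x i * x i) ≤ N →
      (∏ i, x i) ≤ q ^ (n - r) * (q + 1) ^ r := by
  intro N
  induction N using Nat.strong_induction_on with
  | _ N ih =>
  intro n r x hr hx hsum hN
  by_cases hflat : ∀ i j, x i ≤ x j + 1
  · -- flat case: all values are m or m+1
    have hn : 0 < n := by omega
    have hne : (Finset.image x univ).Nonempty :=
      ⟨x ⟨0, hn⟩, mem_image_of_mem x (mem_univ _)⟩
    set m := (Finset.image x univ).min' hne with hm
    have hml : ∀ t, m ≤ x t := fun t =>
      Finset.min'_le _ _ (mem_image_of_mem x (mem_univ t))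
    obtain ⟨tm, _, htm⟩ := Finset.mem_image.mp ((Finset.image x univ).min'_mem hne)
    have hmu : ∀ t, x t ≤ m + 1 := by
      intro t
      have h := hflat t tm
      rw [htm] at h
      exact h
    rcases Nat.lt_trichotomy m q with h | h | h
    · -- m < q : product ≤ q^n
      have h1 : ∏ i, x i ≤ q ^ n := by
        have hb : ∀ i ∈ (univ : Finset (Fin n)), x i ≤ q := by
          intro i _
          have := hmu i
          omega
        calc ∏ i, x i ≤ ∏ _i : Fin n, q := Finset.prod_le_prod (fun i _ => Nat.zero_le _) hb
          _ = q ^ n := by simp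
      calc ∏ i, x i ≤ q ^ n := h1
        _ = q ^ (n - r) * q ^ r := by rw [← pow_add]; congr 1; omega
        _ ≤ q ^ (n - r) * (q + 1) ^ r :=
            Nat.mul_le_mul_left _ (Nat.pow_le_pow_left (Nat.le_succ q) _)
    · -- m = q
      subst h
      set S := univ.filter (fun t => x t = m + 1) with hS
      have hcard : S.card + (univ.filter (fun t => ¬ x t = m + 1)).card = n := by
        rw [Finset.card_filter_add_card_filter_not]
        simp
      have hcs : S.card ≤ n := by omega
      have hrest : ∀ t ∈ univ.filter (fun t => ¬ x t = m + 1), x t = m := by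
        intro t ht
        have h1 := hml t; have h2 := hmu t
        have := (mem_filter.mp ht).2
        omega
      have hprod : ∏ i, x i = (m + 1) ^ S.card * m ^ (n - S.card) := by
        rw [← Finset.prod_filter_mul_prod_filter_not univ (fun t => x t = m + 1)]
        congr 1
        · rw [Finset.prod_congr rfl (fun t ht => (mem_filter.mp ht).2), prod_const]
        · rw [Finset.prod_congr rfl hrest, prod_const]
          congr 1
          omega
      have hsumlb : m * n + S.card ≤ ∑ i, x i := by
        rw [← Finset.sum_filter_add_sum_filter_not univ (fun t => x t = m + 1)]
        have e1 : ∑ t ∈ S, x t = (m + 1) * S.card := by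
          rw [Finset.sum_congr rfl (fun t ht => (mem_filter.mp ht).2), sum_const]
          simp [mul_comm]
          rfl
        have e2 : ∑ t ∈ univ.filter (fun t => ¬ x t = m + 1), x t = m * (n - S.card) := by
          rw [Finset.sum_congr rfl hrest, sum_const]
          have : (univ.filter (fun t => ¬ x t = m + 1)).card = n - S.card := by omega
          simp [this, mul_comm]
        rw [e1, e2]
        have : m * n = m * S.card + m * (n - S.card) := by
          rw [← Nat.mul_add]
          congr 1
          omega
        nlinarith
      have htr : S.card ≤ r := by omega
      rw [hprod]
      exact pow_mix m S.card r n hq htr (by omega)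
    · -- m > q : contradiction
      exfalso
      have h1 : n * (q + 1) ≤ ∑ i, x i := by
        calc n * (q + 1) = ∑ _i : Fin n, (q + 1) := by simp [mul_comm]
          _ ≤ ∑ i, x i := Finset.sum_le_sum (fun i _ => by have := hml i; omega)
      have : n * (q + 1) = q * n + n := by ring
      omega
  · -- smoothing step
    push_neg at hflat
    obtain ⟨i, j, hij⟩ := hflat
    have hne : i ≠ j := by intro h; rw [h] at hij; omega
    set x' := Function.update (Function.update x i (x i - 1)) j (x j + 1) with hx'def
    have hx'i : x' i = x i - 1 := by
      rw [hx'def, Function.update_of_ne hne, Function.update_self]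
    have hx'j : x' j = x j + 1 := by
      rw [hx'def, Function.update_self]
    have hj' : j ∈ univ.erase i := mem_erase.mpr ⟨Ne.symm hne, mem_univ j⟩
    have esum : ∀ f : Fin n → ℕ,
        ∑ t, f t = f i + (f j + ∑ t ∈ (univ.erase i).erase j, f t) := by
      intro f
      rw [← Finset.add_sum_erase _ f (mem_univ i), ← Finset.add_sum_erase _ f hj']
    have eprod : ∀ f : Fin n → ℕ,
        ∏ t, f t = f i * (f j * ∏ t ∈ (univ.erase i).erase j, f t) := by
      intro f
      rw [← Finset.mul_prod_erase _ f (mem_univ i), ← Finset.mul_prod_erase _ f hj']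
    have hrest_eq : ∀ t ∈ (univ.erase i).erase j, x' t = x t := by
      intro t ht
      rw [mem_erase, mem_erase] at ht
      rw [hx'def, Function.update_of_ne ht.1, Function.update_of_ne ht.2.1]
    obtain ⟨c, hc⟩ : ∃ c, x i = c + 2 + x j := ⟨x i - x j - 2, by omega⟩
    have hx'pos : ∀ t, 1 ≤ x' t := by
      intro t
      by_cases h1 : t = j
      · rw [h1, hx'j]; omega
      · by_cases h2 : t = i
        · rw [h2, hx'i]; omega
        · rw [hrest_eq t (mem_erase.mpr ⟨h1, mem_erase.mpr ⟨h2, mem_univ t⟩⟩)]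
          exact hx t
    have hRsum : ∑ t ∈ (univ.erase i).erase j, x' t = ∑ t ∈ (univ.erase i).erase j, x t :=
      Finset.sum_congr rfl hrest_eq
    have hsum' : ∑ t, x' t = ∑ t, x t := by
      rw [esum x', esum x, hRsum, hx'i, hx'j]
      omega
    have hRsq : ∑ t ∈ (univ.erase i).erase j, x' t * x' t
        = ∑ t ∈ (univ.erase i).erase j, x t * x t :=
      Finset.sum_congr rfl (fun t ht => by rw [hrest_eq t ht])
    have hsq : ∑ t, x' t * x' t < ∑ t, x t * x t := by
      rw [esum (fun t => x' t * x' t), esum (fun t => x t * x t)]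
      beta_reduce
      rw [hRsq, hx'i, hx'j, hc]
      have h1 : c + 2 + x j - 1 = c + 1 + x j := by omega
      rw [h1]
      nlinarith
    have hRprod : ∏ t ∈ (univ.erase i).erase j, x' t = ∏ t ∈ (univ.erase i).erase j, x t :=
      Finset.prod_congr rfl hrest_eq
    have hprod : ∏ t, x t ≤ ∏ t, x' t := by
      rw [eprod x', eprod x, hRprod, hx'i, hx'j, hc]
      have h1 : c + 2 + x j - 1 = c + 1 + x j := by omega
      rw [h1, ← mul_assoc, ← mul_assoc]
      exact Nat.mul_le_mul_right _ (by nlinarith)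
    have hlt : ∑ t, x' t * x' t < N := lt_of_lt_of_le hsq hN
    exact le_trans hprod (ih _ hlt n r x' hr hx'pos (by rw [hsum']; exact hsum) le_rfl)

theorem integer_am_gm (ℓ k a : ℕ) (x : Fin ℓ → ℕ)
    (hℓ : 2 ≤ ℓ) (hk1 : 1 ≤ k) (hkℓ : k ≤ ℓ) (ha : 1 ≤ a)
    (hx : ∀ i, 1 ≤ x i)
    (hsum : ∑ i, x i ≤ a * ℓ - k) :
    ∏ i, x i ≤ a ^ (ℓ - k) * (a - 1) ^ k := by
  have hlsum : ℓ ≤ ∑ i, x i := by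
    calc ℓ = ∑ _i : Fin ℓ, 1 := by simp
      _ ≤ ∑ i, x i := Finset.sum_le_sum (fun i _ => hx i)
  rcases Nat.lt_or_ge a 2 with ha2 | ha2
  · -- a = 1 : contradiction
    exfalso
    have : a = 1 := by omega
    subst this
    rw [one_mul] at hsum
    omega
  · obtain ⟨b, rfl⟩ : ∃ b, a = b + 1 := ⟨a - 1, by omega⟩
    have hq : 1 ≤ b := by omega
    have hsum2 : ∑ i, x i ≤ b * ℓ + (ℓ - k) := by
      have h1 : (b + 1) * ℓ = b * ℓ + ℓ := by ring
      omega
    have h := key b hq (∑ i, x i * x i) ℓ (ℓ - k) x (by omega) hx hsum2 le_rfl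
    have h1 : ℓ - (ℓ - k) = k := by omega
    rw [h1] at h
    rw [Nat.add_sub_cancel, mul_comm]
    exact h
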